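/- Fix ε > 0 and p ∈ (0, e^{−ε}), and let λ̲(p) ∈ (0,∞) be the unique zero of λ ↦ Γ₁(p,λ). Then p + Δ_ε(p, λ̲(p)) = (p + λ̲(p))/(1 + λ̲(p)) ∈ (p, 1), kl( p + Δ_ε(p, λ̲(p)) ‖ p ) = ε, and Δ_ε(p, λ̲(p)) = inf_{λ ∈ (0,∞)} Δ_ε(p,λ) = ω(p, ε) > 0. -/

import Mathlib

open Real

/-- Bernoulli Kullback–Leibler divergence `kl(a‖b)`. -/
noncomputable def klBer (a b : ℝ) : ℝ :=
  a * Real.log (a / b) + (1 - a) * Real.log ((1 - a) / (1 - b))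

/-- `ω(p, ε)`. -/
noncomputable def omegaKL (p ε : ℝ) : ℝ :=
  if p = 0 then 0
  else if p ≤ Real.exp (-ε) then
    sInf {η : ℝ | η ∈ Set.Icc 0 (1 - p) ∧ klBer (p + η) p = ε}
  else 1 - p

/-- `Δ_ε(r, λ) = (log(1+λ) + ε)/log(1 + λ/r) - r`. -/
noncomputable def DeltaEps (ε r lam : ℝ) : ℝ :=
  (Real.log (1 + lam) + ε) / Real.log (1 + lam / r) - r

/-- `Γ₁(p,λ) = (p+λ) log(1+λ/p) - (1+λ)(ε + log(1+λ))`. -/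
noncomputable def Gamma1 (ε p lam : ℝ) : ℝ :=
  (p + lam) * Real.log (1 + lam / p) - (1 + lam) * (ε + Real.log (1 + lam))

lemma klBer_ratio (p lam : ℝ) (hp0 : 0 < p) (hp1 : p < 1) (hl : 0 < lam) :
    klBer ((p + lam) / (1 + lam)) p
      = (p + lam) / (1 + lam) * Real.log (1 + lam / p) - Real.log (1 + lam) := by
  have h1l : (0:ℝ) < 1 + lam := by linarith
  have hpl : (0:ℝ) < p + lam := by linarith
  have h1p : (0:ℝ) < 1 - p := by linarith
  have hq : (p + lam) / (1 + lam) / p = (1 + lam / p) / (1 + lam) := by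
    rw [show 1 + lam / p = (p + lam) / p by field_simp, div_div, div_div, mul_comm]
  have h1q : 1 - (p + lam) / (1 + lam) = (1 - p) / (1 + lam) := by
    field_simp
    ring
  have h2 : (1 - p) / (1 + lam) / (1 - p) = 1 / (1 + lam) := by
    rw [div_div, mul_comm (1 + lam), ← div_div, div_self h1p.ne']
  have hLp : (0:ℝ) < 1 + lam / p := by positivity
  unfold klBer
  rw [hq, h1q, h2, Real.log_div hLp.ne' h1l.ne', Real.log_div one_ne_zero h1l.ne',
    Real.log_one]
  field_simp
  ring

lemma klBer_lb (p lam x : ℝ) (hp0 : 0 < p) (hl : 0 < lam)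
    (hx1 : p < x) (hx2 : x < 1) :
    x * Real.log (1 + lam / p) - Real.log (1 + lam) ≤ klBer x p := by
  have h1l : (0:ℝ) < 1 + lam := by linarith
  have hpl : (0:ℝ) < p + lam := by linarith
  have hx0 : 0 < x := lt_trans hp0 hx1
  have h1x : (0:ℝ) < 1 - x := by linarith
  have h1p : (0:ℝ) < 1 - p := by linarith
  set t1 := x * (1 + lam) / (p + lam) with ht1def
  set t2 := (1 - x) * (1 + lam) / (1 - p) with ht2def
  have ht1 : 0 < t1 := by positivity
  have ht2 : 0 < t2 := by positivity
  have hlog1 : 1 - 1 / t1 ≤ Real.log t1 := by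
    have h := Real.log_le_sub_one_of_pos (show (0:ℝ) < 1/t1 by positivity)
    rw [Real.log_div one_ne_zero ht1.ne', Real.log_one] at h
    linarith
  have hlog2 : 1 - 1 / t2 ≤ Real.log t2 := by
    have h := Real.log_le_sub_one_of_pos (show (0:ℝ) < 1/t2 by positivity)
    rw [Real.log_div one_ne_zero ht2.ne', Real.log_one] at h
    linarith
  have e1 : Real.log t1 = Real.log x + Real.log (1 + lam) - Real.log (p + lam) := by
    rw [ht1def, Real.log_div (by positivity) hpl.ne', Real.log_mul hx0.ne' h1l.ne']
  have e2 : Real.log t2 = Real.log (1 - x) + Real.log (1 + lam) - Real.log (1 - p) := by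
    rw [ht2def, Real.log_div (by positivity) h1p.ne', Real.log_mul h1x.ne' h1l.ne']
  have eL : Real.log (1 + lam / p) = Real.log (p + lam) - Real.log p := by
    rw [show 1 + lam / p = (p + lam) / p by field_simp, Real.log_div hpl.ne' hp0.ne']
  have ekl : klBer x p
      = x * (Real.log x - Real.log p) + (1 - x) * (Real.log (1 - x) - Real.log (1 - p)) := by
    unfold klBer
    rw [Real.log_div hx0.ne' hp0.ne', Real.log_div h1x.ne' h1p.ne']
  have key : klBer x p - (x * Real.log (1 + lam / p) - Real.log (1 + lam))
      = x * Real.log t1 + (1 - x) * Real.log t2 := by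
    rw [ekl, e1, e2, eL]; ring
  have hsum : x * (1 - 1 / t1) + (1 - x) * (1 - 1 / t2) = 0 := by
    rw [ht1def, ht2def]
    field_simp
    ring
  have hm1 : x * (1 - 1 / t1) ≤ x * Real.log t1 :=
    mul_le_mul_of_nonneg_left hlog1 hx0.le
  have hm2 : (1 - x) * (1 - 1 / t2) ≤ (1 - x) * Real.log t2 :=
    mul_le_mul_of_nonneg_left hlog2 h1x.le
  linarith

/-- For `ε > 0`, `p ∈ (0, e^{-ε})` and `λ̲(p)` the unique zero of `λ ↦ Γ₁(p,λ)` on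
`(0,∞)`: `p + Δ_ε(p, λ̲(p)) = (p + λ̲(p))/(1 + λ̲(p)) ∈ (p, 1)`,
`kl(p + Δ_ε(p, λ̲(p)) ‖ p) = ε`, and
`Δ_ε(p, λ̲(p)) = inf_{λ > 0} Δ_ε(p, λ) = ω(p, ε) > 0`. -/
theorem Delta_at_minimiser (ε : ℝ) (hε : 0 < ε)
    (p : ℝ) (hp : p ∈ Set.Ioo (0 : ℝ) (Real.exp (-ε)))
    (lam0 : ℝ) (hlam0 : 0 < lam0) (hroot : Gamma1 ε p lam0 = 0)
    (huniq : ∀ lam : ℝ, 0 < lam → Gamma1 ε p lam = 0 → lam = lam0) :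
    p + DeltaEps ε p lam0 = (p + lam0) / (1 + lam0) ∧
    (p + lam0) / (1 + lam0) ∈ Set.Ioo p 1 ∧
    klBer (p + DeltaEps ε p lam0) p = ε ∧
    DeltaEps ε p lam0 = (⨅ lam : Set.Ioi (0 : ℝ), DeltaEps ε p lam) ∧
    DeltaEps ε p lam0 = omegaKL p ε ∧
    0 < DeltaEps ε p lam0 := by
  obtain ⟨hp0, hpe⟩ := hp
  have hexp1 : Real.exp (-ε) < 1 := by
    rw [Real.exp_lt_one_iff]; linarith
  have hp1 : p < 1 := lt_trans hpe hexp1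
  have h1l : (0:ℝ) < 1 + lam0 := by linarith
  have hL0 : 0 < Real.log (1 + lam0 / p) := by
    apply Real.log_pos
    have : 0 < lam0 / p := div_pos hlam0 hp0
    linarith
  set q := (p + lam0) / (1 + lam0) with hqdef
  have hroot' : (p + lam0) * Real.log (1 + lam0 / p)
      = (1 + lam0) * (ε + Real.log (1 + lam0)) := by
    unfold Gamma1 at hroot; linarith
  have hDelta : DeltaEps ε p lam0 = q - p := by
    unfold DeltaEps
    rw [hqdef]
    have h : (Real.log (1 + lam0) + ε) / Real.log (1 + lam0 / p)
        = (p + lam0) / (1 + lam0) := by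
      rw [div_eq_div_iff hL0.ne' h1l.ne']
      linarith
    rw [h]
  have hqp : p < q := by
    rw [hqdef, lt_div_iff₀ h1l]; nlinarith
  have hq1 : q < 1 := by
    rw [hqdef, div_lt_one h1l]; linarith
  have hklq : klBer q p = ε := by
    rw [hqdef, klBer_ratio p lam0 hp0 hp1 hlam0]
    have h : (p + lam0) / (1 + lam0) * Real.log (1 + lam0 / p)
        = ε + Real.log (1 + lam0) := by
      rw [div_mul_eq_mul_div, div_eq_iff h1l.ne']
      linarith
    rw [h]; ring
  have hlb : ∀ l : ℝ, 0 < l → q - p ≤ DeltaEps ε p l := by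
    intro l hl
    have hLl : 0 < Real.log (1 + l / p) := by
      apply Real.log_pos
      have : 0 < l / p := div_pos hl hp0
      linarith
    have hA := klBer_lb p l q hp0 hl hqp hq1
    rw [hklq] at hA
    unfold DeltaEps
    have : q ≤ (Real.log (1 + l) + ε) / Real.log (1 + l / p) := by
      rw [le_div_iff₀ hLl]
      nlinarith
    linarith
  have hq0kl : klBer (p + (q - p)) p = ε := by
    rw [show p + (q - p) = q by ring]; exact hklq
  refine ⟨by rw [hDelta]; ring, ⟨hqp, hq1⟩, by rw [hDelta]; exact hq0kl, ?_, ?_, by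
    rw [hDelta]; linarith⟩
  · apply le_antisymm
    · exact le_ciInf fun l => by rw [hDelta]; exact hlb l l.2
    · have hbdd : BddBelow (Set.range fun lam : Set.Ioi (0:ℝ) => DeltaEps ε p lam) := by
        refine ⟨q - p, ?_⟩
        rintro y ⟨l, rfl⟩
        exact hlb l l.2
      exact ciInf_le hbdd (⟨lam0, hlam0⟩ : Set.Ioi (0:ℝ))
  · rw [hDelta]
    unfold omegaKL
    rw [if_neg hp0.ne', if_pos hpe.le]
    symm
    apply IsLeast.csInf_eq
    constructor
    · exact ⟨⟨by linarith, by linarith⟩, hq0kl⟩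
    · rintro η ⟨⟨hη0, hη1⟩, hηkl⟩
      by_contra hlt
      push_neg at hlt
      have hη0' : 0 < η := by
        rcases eq_or_lt_of_le hη0 with h | h
        · exfalso
          rw [← h, add_zero] at hηkl
          unfold klBer at hηkl
          rw [div_self hp0.ne', div_self (by linarith : (1:ℝ) - p ≠ 0),
            Real.log_one] at hηkl
          simp at hηkl
          linarith
        · exact h
      have hx1q : p + η < q := by linarith
      have h1x1 : 0 < 1 - (p + η) := by linarith
      set l1 := η / (1 - (p + η)) with hl1def
      have hl1pos : 0 < l1 := div_pos hη0' h1x1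
      have hx1eq : (p + l1) / (1 + l1) = p + η := by
        rw [hl1def]
        field_simp
        ring
      have hB := klBer_ratio p l1 hp0 hp1 hl1pos
      rw [hx1eq] at hB
      have hA := klBer_lb p l1 q hp0 hl1pos hqp hq1
      rw [hklq] at hA
      have hL1 : 0 < Real.log (1 + l1 / p) := by
        apply Real.log_pos
        have : 0 < l1 / p := div_pos hl1pos hp0
        linarith
      have hmul : (p + η) * Real.log (1 + l1 / p) < q * Real.log (1 + l1 / p) :=
        mul_lt_mul_of_pos_right hx1q hL1
      have : klBer (p + η) p < ε := by linarith
      linarith [hηkl]
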